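/- Let x_1,…,x_n, y_1,…,y_n be 2n jointly independent and identically distributed real random variables with zero mean and E[x_1²] = υ (square-integrable, with |x_1| integrable). Then E[υ·n·Σ_{i=1}^n x_i² − (Σ_{i=1}^n x_i y_i)²] = n(n−1)υ², and E[υ·(Σ_{i=1}^n |x_i|)² − (Σ_{i=1}^n x_i y_i)²] = n(n−1)·υ·(E[|x_1|])². -/

import Mathlib

open Finset MeasureTheory ProbabilityTheory

private lemma l2_mul_integrable' {Ω : Type*} [MeasurableSpace Ω] {μ : Measure Ω}
    {f g : Ω → ℝ} (hf : MemLp f 2 μ) (hg : MemLp g 2 μ) :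
    Integrable (fun ω => f ω * g ω) μ := by
  have h : MemLp (f • g) 1 μ := hg.smul hf
  rw [memLp_one_iff_integrable] at h
  exact h

private lemma indep_integral_mul' {Ω : Type*} [MeasurableSpace Ω] {μ : Measure Ω}
    {f g : Ω → ℝ} (h : IndepFun f g μ) (hf : Integrable f μ) (hg : Integrable g μ) :
    ∫ ω, f ω * g ω ∂μ = (∫ ω, f ω ∂μ) * ∫ ω, g ω ∂μ := by
  have := h.integral_mul_eq_mul_integral hf.aestronglyMeasurable hg.aestronglyMeasurable
  simpa [Pi.mul_apply] using this

/-- Average variances of the importance-sampling inner-product estimator for the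
`L²` (`p = 2`) and `L¹` (`p = 1`) data structures, for i.i.d. zero-mean entries. -/
theorem stmt_5 {Ω : Type*} [MeasurableSpace Ω] (μ : Measure Ω) [IsProbabilityMeasure μ]
    {n : ℕ} [NeZero n] (X Y : Fin n → Ω → ℝ) (υ : ℝ)
    (hmX : ∀ i, Measurable (X i)) (hmY : ∀ i, Measurable (Y i))
    (hindep : iIndepFun (Sum.elim X Y) μ)
    (hident : ∀ k : Fin n ⊕ Fin n, IdentDistrib (Sum.elim X Y k) (X 0) μ μ)
    (hL2 : MemLp (X 0) 2 μ) (habs : Integrable (fun ω => |X 0 ω|) μ)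
    (hmean : ∫ ω, X 0 ω ∂μ = 0) (hmom2 : ∫ ω, (X 0 ω) ^ 2 ∂μ = υ) :
    (∫ ω, (υ * n * ∑ i, (X i ω) ^ 2 - (∑ i, X i ω * Y i ω) ^ 2) ∂μ
        = (n : ℝ) * ((n : ℝ) - 1) * υ ^ 2) ∧
    (∫ ω, (υ * (∑ i, |X i ω|) ^ 2 - (∑ i, X i ω * Y i ω) ^ 2) ∂μ
        = (n : ℝ) * ((n : ℝ) - 1) * υ * (∫ ω, |X 0 ω| ∂μ) ^ 2) := by
  set m := ∫ ω, |X 0 ω| ∂μ with hm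
  have hmZ : ∀ k, Measurable (Sum.elim X Y k) := by
    rintro (i | i)
    · exact hmX i
    · exact hmY i
  have hL2Z : ∀ k, MemLp (Sum.elim X Y k) 2 μ := fun k => (hident k).symm.memLp_snd hL2
  have hintZ : ∀ k, Integrable (Sum.elim X Y k) μ := fun k => (hL2Z k).integrable one_le_two
  have hmeanZ : ∀ k, ∫ ω, Sum.elim X Y k ω ∂μ = 0 := fun k => (hident k).integral_eq.trans hmean
  have hsqZ : ∀ k, ∫ ω, (Sum.elim X Y k ω) ^ 2 ∂μ = υ := fun k =>
    ((hident k).comp (measurable_id.pow_const 2)).integral_eq.trans hmom2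
  have habsZ : ∀ k, ∫ ω, |Sum.elim X Y k ω| ∂μ = m := fun k =>
    ((hident k).comp measurable_abs).integral_eq
  have hsqint : ∀ k, Integrable (fun ω => (Sum.elim X Y k ω) ^ 2) μ :=
    fun k => (hL2Z k).integrable_sq
  -- specialized to X and Y
  have hL2X : ∀ i : Fin n, MemLp (X i) 2 μ := fun i => hL2Z (Sum.inl i)
  have hL2Y : ∀ i : Fin n, MemLp (Y i) 2 μ := fun i => hL2Z (Sum.inr i)
  have hintX : ∀ i : Fin n, Integrable (X i) μ := fun i => hintZ (Sum.inl i)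
  have hintY : ∀ i : Fin n, Integrable (Y i) μ := fun i => hintZ (Sum.inr i)
  have hmeanX : ∀ i : Fin n, ∫ ω, X i ω ∂μ = 0 := fun i => hmeanZ (Sum.inl i)
  have hsqintX : ∀ i : Fin n, Integrable (fun ω => (X i ω) ^ 2) μ := fun i => hsqint (Sum.inl i)
  have hsqintY : ∀ i : Fin n, Integrable (fun ω => (Y i ω) ^ 2) μ := fun i => hsqint (Sum.inr i)
  have hsqX : ∀ i : Fin n, ∫ ω, (X i ω) ^ 2 ∂μ = υ := fun i => hsqZ (Sum.inl i)
  have hsqY : ∀ i : Fin n, ∫ ω, (Y i ω) ^ 2 ∂μ = υ := fun i => hsqZ (Sum.inr i)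
  have habsX : ∀ i : Fin n, ∫ ω, |X i ω| ∂μ = m := fun i => habsZ (Sum.inl i)
  -- products X i * Y i are in L²
  have hprodL2 : ∀ i, MemLp (fun ω => X i ω * Y i ω) 2 μ := by
    intro i
    have hind : IndepFun (X i) (Y i) μ :=
      hindep.indepFun (show (Sum.inl i : Fin n ⊕ Fin n) ≠ Sum.inr i by simp)
    have hind2 : IndepFun (fun ω => (X i ω) ^ 2) (fun ω => (Y i ω) ^ 2) μ :=
      hind.comp (measurable_id.pow_const 2) (measurable_id.pow_const 2)
    have h2 : Integrable (fun ω => (X i ω) ^ 2 * (Y i ω) ^ 2) μ :=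
      hind2.integrable_mul (hsqintX i) (hsqintY i)
    refine (memLp_two_iff_integrable_sq ((hmX i).mul (hmY i)).aestronglyMeasurable).2 ?_
    simpa [mul_pow] using h2
  have hprodmean : ∀ i, ∫ ω, X i ω * Y i ω ∂μ = 0 := by
    intro i
    have hind : IndepFun (X i) (Y i) μ :=
      hindep.indepFun (show (Sum.inl i : Fin n ⊕ Fin n) ≠ Sum.inr i by simp)
    rw [indep_integral_mul' hind (hintX i) (hintY i), hmeanX i, zero_mul]
  -- cross moments of the products
  have hcross : ∀ i j : Fin n, ∫ ω, (X i ω * Y i ω) * (X j ω * Y j ω) ∂μ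
      = if j = i then υ ^ 2 else 0 := by
    intro i j
    by_cases hij : j = i
    · subst hij
      have hind2 : IndepFun (fun ω => (X j ω) ^ 2) (fun ω => (Y j ω) ^ 2) μ :=
        (hindep.indepFun (show (Sum.inl j : Fin n ⊕ Fin n) ≠ Sum.inr j by simp)).comp
          (measurable_id.pow_const 2) (measurable_id.pow_const 2)
      have heq : ∀ ω, (X j ω * Y j ω) * (X j ω * Y j ω) = (X j ω) ^ 2 * (Y j ω) ^ 2 :=
        fun ω => by ring
      rw [if_pos rfl]
      calc ∫ ω, (X j ω * Y j ω) * (X j ω * Y j ω) ∂μ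
          = ∫ ω, (X j ω) ^ 2 * (Y j ω) ^ 2 ∂μ := by simp only [heq]
        _ = υ ^ 2 := by
            rw [indep_integral_mul' hind2 (hsqintX j) (hsqintY j), hsqX j, hsqY j, sq]
    · have hind : IndepFun (fun ω => X i ω * Y i ω) (fun ω => X j ω * Y j ω) μ :=
        hindep.indepFun_mul_mul hmZ (Sum.inl i) (Sum.inr i) (Sum.inl j) (Sum.inr j)
          (fun h => hij (Sum.inl.inj h).symm) (by simp) (by simp)
          (fun h => hij (Sum.inr.inj h).symm)
      rw [if_neg hij, indep_integral_mul' hind ((hprodL2 i).integrable one_le_two)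
        ((hprodL2 j).integrable one_le_two), hprodmean i, zero_mul]
  -- expansion of the square of the sum of products
  have hexp : (fun ω => (∑ i, X i ω * Y i ω) ^ 2)
      = fun ω => ∑ i, ∑ j, (X i ω * Y i ω) * (X j ω * Y j ω) :=
    funext fun ω => by rw [sq, Finset.sum_mul_sum]
  have hBint : Integrable (fun ω => (∑ i, X i ω * Y i ω) ^ 2) μ := by
    rw [hexp]
    exact integrable_finset_sum _ fun i _ => integrable_finset_sum _ fun j _ =>
      l2_mul_integrable' (hprodL2 i) (hprodL2 j)
  have hB : ∫ ω, (∑ i, X i ω * Y i ω) ^ 2 ∂μ = (n : ℝ) * υ ^ 2 := by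
    rw [hexp, integral_finset_sum _ fun i _ => integrable_finset_sum _ fun j _ =>
      l2_mul_integrable' (hprodL2 i) (hprodL2 j)]
    have h1 : ∀ i ∈ univ, (∫ ω, ∑ j, (X i ω * Y i ω) * (X j ω * Y j ω) ∂μ) = υ ^ 2 := by
      intro i _
      rw [integral_finset_sum _ fun j _ => l2_mul_integrable' (hprodL2 i) (hprodL2 j)]
      simp [hcross i]
    rw [Finset.sum_congr rfl h1, Finset.sum_const, Finset.card_univ, Fintype.card_fin,
      nsmul_eq_mul]
  -- first moment of the sum of squares
  have hAint : Integrable (fun ω => ∑ i, (X i ω) ^ 2) μ :=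
    integrable_finset_sum _ fun i _ => hsqintX i
  have hA : ∫ ω, ∑ i, (X i ω) ^ 2 ∂μ = (n : ℝ) * υ := by
    rw [integral_finset_sum _ fun i _ => hsqintX i,
      Finset.sum_congr rfl fun i _ => hsqX i, Finset.sum_const, Finset.card_univ,
      Fintype.card_fin, nsmul_eq_mul]
  -- L¹-type quantities
  have habsL2 : ∀ i, MemLp (fun ω => |X i ω|) 2 μ := by
    intro i
    simpa [Real.norm_eq_abs] using (hL2X i).norm
  have hcrossabs : ∀ i j : Fin n, ∫ ω, |X i ω| * |X j ω| ∂μ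
      = if j = i then υ else m ^ 2 := by
    intro i j
    by_cases hij : j = i
    · subst hij
      have heq : ∀ ω, |X j ω| * |X j ω| = (X j ω) ^ 2 := fun ω => by
        rw [abs_mul_abs_self]; ring
      rw [if_pos rfl]
      calc ∫ ω, |X j ω| * |X j ω| ∂μ = ∫ ω, (X j ω) ^ 2 ∂μ := by simp only [heq]
        _ = υ := hsqX j
    · have hind : IndepFun (fun ω => |X i ω|) (fun ω => |X j ω|) μ :=
        (hindep.indepFun (show (Sum.inl i : Fin n ⊕ Fin n) ≠ Sum.inl j from
          fun h => hij (Sum.inl.inj h).symm)).comp measurable_abs measurable_abs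
      rw [if_neg hij, indep_integral_mul' hind (hintX i).abs (hintX j).abs,
        habsX i, habsX j, sq]
  have hexpabs : (fun ω => (∑ i, |X i ω|) ^ 2)
      = fun ω => ∑ i, ∑ j, |X i ω| * |X j ω| :=
    funext fun ω => by rw [sq, Finset.sum_mul_sum]
  have hCint : Integrable (fun ω => (∑ i, |X i ω|) ^ 2) μ := by
    rw [hexpabs]
    exact integrable_finset_sum _ fun i _ => integrable_finset_sum _ fun j _ =>
      l2_mul_integrable' (habsL2 i) (habsL2 j)
  have hC : ∫ ω, (∑ i, |X i ω|) ^ 2 ∂μ = (n : ℝ) * (υ + ((n : ℝ) - 1) * m ^ 2) := by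
    rw [hexpabs, integral_finset_sum _ fun i _ => integrable_finset_sum _ fun j _ =>
      l2_mul_integrable' (habsL2 i) (habsL2 j)]
    have h2 : ∀ i ∈ univ, (∫ ω, ∑ j, |X i ω| * |X j ω| ∂μ) = υ + ((n : ℝ) - 1) * m ^ 2 := by
      intro i _
      rw [integral_finset_sum _ fun j _ => l2_mul_integrable' (habsL2 i) (habsL2 j)]
      have h1 : ∀ j ∈ univ, (∫ ω, |X i ω| * |X j ω| ∂μ)
          = m ^ 2 + (if j = i then υ - m ^ 2 else 0) := by
        intro j _
        rw [hcrossabs i j]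
        split <;> ring
      rw [Finset.sum_congr rfl h1, Finset.sum_add_distrib, Finset.sum_const,
        Finset.sum_ite_eq' univ i fun _ => υ - m ^ 2, if_pos (Finset.mem_univ i),
        Finset.card_univ, Fintype.card_fin, nsmul_eq_mul]
      ring
    rw [Finset.sum_congr rfl h2, Finset.sum_const, Finset.card_univ, Fintype.card_fin,
      nsmul_eq_mul]
  constructor
  · have h1 : Integrable (fun ω => υ * n * ∑ i, (X i ω) ^ 2) μ := hAint.const_mul _
    rw [integral_sub h1 hBint, integral_const_mul, hA, hB]
    ring
  · have h1 : Integrable (fun ω => υ * (∑ i, |X i ω|) ^ 2) μ := hCint.const_mul _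
    rw [integral_sub h1 hBint, integral_const_mul, hC, hB]
    ring
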